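/- In the quantum integer notation [r] = (v^r - v^{-r})/(v - v^{-1}) with Gaussian binomial coefficients, for any integers b ≥ 0 and 0 ≤ v1, v2 with v1 + v2 ≤ b + 1, one has [b choose v1]·[b choose v2] − [b choose v1−1]·[b choose v2−1] = [b+1 choose v1]·[b+1 choose v2]·([b+1−v1−v2]/[b+1]). -/

import Mathlib

/-!
Quantum integers `[r] = (v^r - v^{-r})/(v - v⁻¹)` over `ℚ(v)`, quantum factorials,
and Gaussian binomial coefficients `[m choose r]` for `m ∈ ℤ`, `r ∈ ℤ`
(with `[m choose r] = 0` when `r < 0`).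
-/

noncomputable section

/-- The indeterminate `v`. -/
def v : RatFunc ℚ := RatFunc.X

/-- Quantum integer `[r]`. -/
def qint (r : ℤ) : RatFunc ℚ := (v ^ r - v ^ (-r)) / (v - v⁻¹)

/-- Quantum factorial `[n]!`. -/
def qfact (n : ℕ) : RatFunc ℚ := ∏ i ∈ Finset.range n, qint ((i : ℤ) + 1)

/-- Gaussian binomial coefficient `[m choose r]`, zero for `r < 0`. -/
def qbinom (m r : ℤ) : RatFunc ℚ :=
  if r < 0 then 0
  else (∏ i ∈ Finset.range r.toNat, qint (m - (i : ℤ))) / qfact r.toNat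

lemma v_ne_zero : v ≠ 0 := RatFunc.X_ne_zero

lemma v_pow_ne_one {n : ℕ} (hn : n ≠ 0) : v ^ (n : ℤ) ≠ 1 := by
  rw [zpow_natCast]
  intro hEq
  have : (Polynomial.X : Polynomial ℚ) ^ n = 1 := by
    apply RatFunc.algebraMap_injective ℚ
    simpa [v, map_pow, RatFunc.algebraMap_X] using hEq
  have := congrArg Polynomial.natDegree this
  simp [Polynomial.natDegree_X_pow] at this
  exact hn this

lemma v_sub_inv_ne_zero : v - v⁻¹ ≠ 0 := by
  intro hEq
  have hv : v = v⁻¹ := by linear_combination hEq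
  have : v ^ ((2:ℕ) : ℤ) = 1 := by
    rw [zpow_natCast, pow_two]
    nth_rewrite 2 [hv]
    exact mul_inv_cancel₀ v_ne_zero
  exact v_pow_ne_one (by norm_num) this

lemma qint_zero : qint 0 = 0 := by simp [qint]

lemma qint_ne_zero {r : ℤ} (hr : r ≠ 0) : qint r ≠ 0 := by
  have hnum : v ^ r - v ^ (-r) ≠ 0 := by
    intro hEq
    have hvr : v ^ r = v ^ (-r) := by linear_combination hEq
    have h2 : v ^ (2 * r) = 1 := by
      have := congrArg (· * v ^ r) hvr
      simp only [← zpow_add₀ v_ne_zero] at this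
      simpa [two_mul] using this
    rcases lt_or_gt_of_ne hr with h | h
    · have : v ^ ((2 * (-r)).toNat : ℤ) = 1 := by
        rw [Int.toNat_of_nonneg (by omega)]
        rw [show 2 * -r = -(2*r) by ring, zpow_neg, h2, inv_one]
      exact v_pow_ne_one (by omega) this
    · have : v ^ ((2 * r).toNat : ℤ) = 1 := by
        rw [Int.toNat_of_nonneg (by omega)]; exact h2
      exact v_pow_ne_one (by omega) this
  exact div_ne_zero hnum v_sub_inv_ne_zero

-- core identity: [m-a][m-c] - [a][c] = [m][m-a-c]

lemma qint_core (m a c : ℤ) :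
    qint (m - a) * qint (m - c) - qint a * qint c = qint m * qint (m - a - c) := by
  unfold qint
  rw [div_mul_div_comm, div_mul_div_comm, div_mul_div_comm, div_sub_div_same]
  congr 1
  have hA : v ^ m ≠ 0 := zpow_ne_zero _ v_ne_zero
  have hB : v ^ a ≠ 0 := zpow_ne_zero _ v_ne_zero
  have hC : v ^ c ≠ 0 := zpow_ne_zero _ v_ne_zero
  simp only [show m - a - c = m - (a + c) by ring, neg_sub, zpow_sub₀ v_ne_zero,
    zpow_neg, zpow_add₀ v_ne_zero]
  field_simp
  ring

lemma qfact_ne_zero (n : ℕ) : qfact n ≠ 0 := by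
  unfold qfact
  apply Finset.prod_ne_zero_iff.mpr
  intro i _
  exact qint_ne_zero (by omega)

lemma qfact_succ (n : ℕ) : qfact (n + 1) = qfact n * qint ((n : ℤ) + 1) := by
  unfold qfact; rw [Finset.prod_range_succ]

-- R1: [b+1 choose k] * [b+1-k] = [b choose k] * [b+1]  for k ≥ 0

lemma qbinom_rec1 (b k : ℤ) (hk : 0 ≤ k) :
    qbinom (b + 1) k * qint (b + 1 - k) = qbinom b k * qint (b + 1) := by
  unfold qbinom
  rw [if_neg (by omega), if_neg (by omega)]
  rw [div_mul_eq_mul_div, div_mul_eq_mul_div]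
  congr 1
  have h1 : (∏ i ∈ Finset.range k.toNat, qint (b + 1 - (i : ℤ))) * qint (b + 1 - k)
      = ∏ i ∈ Finset.range (k.toNat + 1), qint (b + 1 - (i : ℤ)) := by
    rw [Finset.prod_range_succ]
    congr 2
    omega
  rw [h1, Finset.prod_range_succ']
  conv_lhs => rw [mul_comm]
  conv_rhs => rw [mul_comm]
  congr 1
  · norm_num
  · apply Finset.prod_congr rfl
    intro i _
    congr 1
    push_cast
    ring

-- R2: [b choose k] * [k] = [b choose k-1] * [b+1-k]  for k ≥ 0

lemma qbinom_rec2 (b k : ℤ) (hk : 0 ≤ k) :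
    qbinom b k * qint k = qbinom b (k - 1) * qint (b + 1 - k) := by
  rcases eq_or_lt_of_le hk with h0 | h0
  · rw [← h0]; simp [qint_zero, qbinom]
  · unfold qbinom
    rw [if_neg (by omega), if_neg (by omega)]
    obtain ⟨n, hn⟩ : ∃ n : ℕ, k.toNat = n + 1 := ⟨k.toNat - 1, by omega⟩
    have hn1 : (k - 1).toNat = n := by omega
    rw [hn, hn1, qfact_succ, Finset.prod_range_succ]
    have hkn : (n : ℤ) + 1 = k := by omega
    rw [hkn]
    have hbn : b - (n : ℤ) = b + 1 - k := by omega
    rw [hbn]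
    rw [div_mul_eq_mul_div, div_mul_eq_mul_div]
    rw [mul_comm (qfact n) (qint k), ← div_div]
    rw [mul_div_assoc, mul_div_assoc]
    rw [div_self (qint_ne_zero (by omega)), mul_one_div]

lemma qbinom_neg_one (b : ℤ) : qbinom b (-1) = 0 := by
  unfold qbinom; rw [if_pos (by omega)]

lemma qbinom_self_succ (b : ℤ) (hb : 0 ≤ b) : qbinom b (b + 1) = 0 := by
  unfold qbinom
  rw [if_neg (by omega)]
  apply div_eq_zero_iff.mpr
  left
  apply Finset.prod_eq_zero (i := b.toNat) (by simp; omega)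
  rw [show b - (b.toNat : ℤ) = 0 by omega, qint_zero]

/-- for `b ≥ 0`, `0 ≤ v₁, v₂` with `v₁ + v₂ ≤ b + 1`,
`[b,v₁][b,v₂] − [b,v₁−1][b,v₂−1] = [b+1,v₁][b+1,v₂]·[b+1−v₁−v₂]/[b+1]`. -/
theorem qbinom_diff_identity (b v1 v2 : ℤ) (hb : 0 ≤ b) (h1 : 0 ≤ v1) (h2 : 0 ≤ v2)
    (h : v1 + v2 ≤ b + 1) :
    qbinom b v1 * qbinom b v2 - qbinom b (v1 - 1) * qbinom b (v2 - 1)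
      = qbinom (b + 1) v1 * qbinom (b + 1) v2 * (qint (b + 1 - v1 - v2) / qint (b + 1)) := by
  by_cases hv1 : v1 ≤ b
  · by_cases hv2 : v2 ≤ b
    · -- general case
      have hx1 : qint (b + 1 - v1) ≠ 0 := qint_ne_zero (by omega)
      have hx2 : qint (b + 1 - v2) ≠ 0 := qint_ne_zero (by omega)
      have hI : qint (b + 1) ≠ 0 := qint_ne_zero (by omega)
      have hQ1 : qbinom (b + 1) v1 = qbinom b v1 * qint (b + 1) / qint (b + 1 - v1) := by
        rw [eq_div_iff hx1]; exact qbinom_rec1 b v1 h1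
      have hQ2 : qbinom (b + 1) v2 = qbinom b v2 * qint (b + 1) / qint (b + 1 - v2) := by
        rw [eq_div_iff hx2]; exact qbinom_rec1 b v2 h2
      have hB1 : qbinom b (v1 - 1) = qbinom b v1 * qint v1 / qint (b + 1 - v1) := by
        rw [eq_div_iff hx1]; exact (qbinom_rec2 b v1 h1).symm
      have hB2 : qbinom b (v2 - 1) = qbinom b v2 * qint v2 / qint (b + 1 - v2) := by
        rw [eq_div_iff hx2]; exact (qbinom_rec2 b v2 h2).symm
      rw [hQ1, hQ2, hB1, hB2]
      field_simp
      linear_combination (qbinom b v1 * qbinom b v2) * qint_core (b + 1) v1 v2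
    · -- v2 = b + 1, v1 = 0
      have e2 : v2 = b + 1 := by omega
      have e1 : v1 = 0 := by omega
      subst e2 e1
      rw [qbinom_self_succ b hb, show (0:ℤ) - 1 = -1 by ring, qbinom_neg_one,
        show b + 1 - 0 - (b + 1) = 0 by ring, qint_zero]
      simp
  · -- v1 = b + 1, v2 = 0
    have e1 : v1 = b + 1 := by omega
    have e2 : v2 = 0 := by omega
    subst e1 e2
    rw [qbinom_self_succ b hb, show (0:ℤ) - 1 = -1 by ring, qbinom_neg_one,
      show b + 1 - (b + 1) - 0 = 0 by ring, qint_zero]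
    simp
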